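/- A natural transformation of homological functors whose localisation and colocalisation are invertible is invertible: let Φ : F ⟶ F' be a natural transformation between homological functors F, F' : T ⥤ Ab. If for every object B of T both induced maps RΦ_B : RF(B) → RF'(B) (on the colimits over Wo(B)) and R⊥Φ_B : R⊥F(B) → R⊥F'(B) (on the colimits over Subo(B)) are isomorphisms, then Φ_B : F(B) → F'(B) is an isomorphism for every B. -/

import Mathlib

open CategoryTheory Category Limits Pretriangulated Triangulated

universe u

namespace CategoryTheory.Triangulated

/-- The December 2024 Mathlib `Triangulated.Subcategory` (removed since), with its old meaning. -/
structure Subcategory (C : Type*) [Category C] [HasZeroObject C] [HasShift C ℤ] [Preadditive C]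
    [∀ n : ℤ, (shiftFunctor C n).Additive] [Pretriangulated C] where
  P : C → Prop
  zero' : ∃ (Z : C) (_ : IsZero Z), P Z
  shift (X : C) (n : ℤ) : P X → P (X⟦n⟧)
  ext₂' (T : Triangle C) (_ : T ∈ distTriang C) : P T.obj₁ → P T.obj₃ →
    ObjectProperty.isoClosure P T.obj₂

/-- The old `Triangulated.Subcategory.W`. -/
def Subcategory.W {C : Type*} [Category C] [HasZeroObject C] [HasShift C ℤ] [Preadditive C]
    [∀ n : ℤ, (shiftFunctor C n).Additive] [Pretriangulated C] (S : Subcategory C) :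
    MorphismProperty C := fun X Y f => ∃ (Z : C) (g : Y ⟶ Z) (h : Z ⟶ X⟦(1 : ℤ)⟧)
  (_ : Triangle.mk f g h ∈ distTriang C), S.P Z

end CategoryTheory.Triangulated

variable {T : Type u} [SmallCategory T] [HasZeroObject T] [Preadditive T]
  [HasShift T ℤ] [∀ n : ℤ, (shiftFunctor T n).Additive] [Pretriangulated T]

variable (E : Triangulated.Subcategory T)

/-- `Subo(B)`: full subcategory of `Over B` on morphisms `s : X ⟶ B` with `X` in `E`. -/
abbrev SuboCat (B : T) := ObjectProperty.FullSubcategory (fun f : Over B => E.P f.left)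

/-- The diagram `(s : X ⟶ B) ↦ F(X)` on `Subo(B)`. -/
def suboDiagram (F : T ⥤ Ab.{u}) (B : T) : SuboCat E B ⥤ Ab.{u} :=
  ObjectProperty.ι _ ⋙ Over.forget B ⋙ F

/-- The right colocalisation `R⊥F(B) := colim_{Subo(B)} F(X)`. -/
noncomputable abbrev coloc (F : T ⥤ Ab.{u}) (B : T) : Ab.{u} :=
  colimit (suboDiagram E F B)
/-- A natural transformation `Φ : F ⟶ F'` induces a natural transformation of
diagrams on `Subo(B)`. -/
def suboWhisker {F F' : T ⥤ Ab.{u}} (Φ : F ⟶ F') (B : T) :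
    suboDiagram E F B ⟶ suboDiagram E F' B where
  app X := Φ.app X.obj.left
  naturality := by
    intro X Y g
    dsimp [suboDiagram]
    exact Φ.naturality g.hom.left

/-- The map `R⊥Φ_B : R⊥F(B) ⟶ R⊥F'(B)` induced by `Φ : F ⟶ F'`. -/
noncomputable def colocMapNat {F F' : T ⥤ Ab.{u}} (Φ : F ⟶ F') (B : T) :
    coloc E F B ⟶ coloc E F' B :=
  colimMap (suboWhisker E Φ B)

/-- `Wo(B)`: full subcategory of `Under B` on morphisms `s : B ⟶ C` that are
`E`-weak equivalences. -/
abbrev WoCat (B : T) := ObjectProperty.FullSubcategory (fun f : Under B => E.W f.hom)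

/-- The diagram `(s : B ⟶ C) ↦ F(C)` on `Wo(B)`. -/
def woDiagram (F : T ⥤ Ab.{u}) (B : T) : WoCat E B ⥤ Ab.{u} :=
  ObjectProperty.ι _ ⋙ Under.forget B ⋙ F

/-- The right localisation `RF(B) := colim_{Wo(B)} F(C)`. -/
noncomputable abbrev loc (F : T ⥤ Ab.{u}) (B : T) : Ab.{u} :=
  colimit (woDiagram E F B)

/-- A natural transformation `Φ : F ⟶ F'` induces a natural transformation of
diagrams on `Wo(B)`. -/
def woWhisker {F F' : T ⥤ Ab.{u}} (Φ : F ⟶ F') (B : T) :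
    woDiagram E F B ⟶ woDiagram E F' B where
  app X := Φ.app X.obj.right
  naturality := by
    intro X Y g
    dsimp [woDiagram]
    exact Φ.naturality g.hom.right

/-- The map `RΦ_B : RF(B) ⟶ RF'(B)` induced by `Φ : F ⟶ F'`. -/
noncomputable def locMapNat {F F' : T ⥤ Ab.{u}} (Φ : F ⟶ F') (B : T) :
    loc E F B ⟶ loc E F' B :=
  colimMap (woWhisker E Φ B)

namespace CategoryTheory.Triangulated.Subcategory

variable {C : Type*} [Category C] [HasZeroObject C] [HasShift C ℤ] [Preadditive C]
  [∀ n : ℤ, (shiftFunctor C n).Additive] [Pretriangulated C]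

instance isTriangulated_P (S : Subcategory C) : ObjectProperty.IsTriangulated S.P where
  exists_zero := by
    obtain ⟨Z, hZ, h⟩ := S.zero'
    exact ⟨Z, hZ, h⟩
  isStableUnderShiftBy a := ⟨fun X hX => S.shift X a hX⟩
  ext₂' := S.ext₂'

lemma W_eq (S : Subcategory C) : S.W = ObjectProperty.trW S.P := rfl

instance W_isMultiplicative (S : Subcategory C) [IsTriangulated C] : S.W.IsMultiplicative := by
  rw [W_eq]; infer_instance

instance W_hasLeftCalculusOfFractions (S : Subcategory C) [IsTriangulated C] :
    S.W.HasLeftCalculusOfFractions := by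
  rw [W_eq]; infer_instance

end CategoryTheory.Triangulated.Subcategory

section Auxiliary

variable [IsTriangulated T]

/-- `Wo(B)` is filtered (uses the left calculus of fractions for `E.W`). -/
instance woFilteredOrEmpty (B : T) : IsFilteredOrEmpty (WoCat E B) where
  cocone_objs X Y := by
    obtain ⟨ψ, hψ⟩ := (MorphismProperty.RightFraction.mk X.obj.hom X.property Y.obj.hom).exists_leftFraction
    refine ⟨⟨Under.mk (Y.obj.hom ≫ ψ.s), E.W.comp_mem _ _ Y.property ψ.hs⟩,
      ObjectProperty.homMk (Under.homMk ψ.f ?_), ObjectProperty.homMk (Under.homMk ψ.s rfl), trivial⟩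
    dsimp
    exact hψ.symm
  cocone_maps X Y f g := by
    obtain ⟨Y', t, ht, hfg⟩ := MorphismProperty.HasLeftCalculusOfFractions.ext
      f.hom.right g.hom.right X.obj.hom X.property (by rw [Under.w f.hom, Under.w g.hom])
    refine ⟨⟨Under.mk (Y.obj.hom ≫ t), E.W.comp_mem _ _ Y.property ht⟩,
      ObjectProperty.homMk (Under.homMk t rfl), ?_⟩
    apply ObjectProperty.hom_ext
    apply StructuredArrow.hom_ext
    simpa using hfg

instance woFiltered (B : T) : IsFiltered (WoCat E B) :=
  { nonempty := ⟨⟨Under.mk (𝟙 B), MorphismProperty.id_mem _ B⟩⟩ }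

variable [ObjectProperty.IsClosedUnderIsomorphisms E.P]

/-- `Subo(B)` is filtered. -/
instance suboFilteredOrEmpty (B : T) : IsFilteredOrEmpty (SuboCat E B) where
  cocone_objs X Y := by
    refine ⟨⟨Over.mk (biprod.desc X.obj.hom Y.obj.hom),
      ObjectProperty.ext_of_isTriangulatedClosed₂ E.P _ (binaryBiproductTriangle_distinguished X.obj.left Y.obj.left)
        X.property Y.property⟩,
      ObjectProperty.homMk (Over.homMk biprod.inl (by simp)), ObjectProperty.homMk (Over.homMk biprod.inr (by simp)), trivial⟩
  cocone_maps X Y f g := by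
    obtain ⟨C₀, q, r, hTr⟩ := distinguished_cocone_triangle (f.hom.left - g.hom.left)
    have hC : E.P C₀ := ObjectProperty.ext_of_isTriangulatedClosed₃ E.P _ hTr X.property Y.property
    obtain ⟨c, hc⟩ := Pretriangulated.Triangle.yoneda_exact₂ _ hTr Y.obj.hom
      (by
        show (f.hom.left - g.hom.left) ≫ Y.obj.hom = 0
        have h1 : f.hom.left ≫ Y.obj.hom = X.obj.hom := Over.w f.hom
        have h2 : g.hom.left ≫ Y.obj.hom = X.obj.hom := Over.w g.hom
        rw [Preadditive.sub_comp, h1, h2, sub_self])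
    refine ⟨⟨Over.mk c, hC⟩, ObjectProperty.homMk (Over.homMk q hc.symm), ?_⟩
    apply ObjectProperty.hom_ext
    apply CostructuredArrow.hom_ext
    have h0 : (f.hom.left - g.hom.left) ≫ q = 0 := comp_distTriang_mor_zero₁₂ _ hTr
    rw [Preadditive.sub_comp, sub_eq_zero] at h0
    exact h0

open ZeroObject in
instance suboFiltered (B : T) : IsFiltered (SuboCat E B) :=
  { nonempty := ⟨⟨Over.mk (0 : (0 : T) ⟶ B), ObjectProperty.prop_zero E.P⟩⟩ }

end Auxiliary

section ElemHelpers

/-- Elementwise exactness of a homological functor on a distinguished triangle. -/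
lemma hom_exact_elem (F : T ⥤ Ab.{u}) [F.IsHomological] {Tr : Pretriangulated.Triangle T}
    (hTr : Tr ∈ distTriang T) (x : F.obj Tr.obj₂) (hx : F.map Tr.mor₂ x = 0) :
    ∃ y : F.obj Tr.obj₁, F.map Tr.mor₁ y = x := by
  have h := F.map_distinguished_exact Tr hTr
  rw [ShortComplex.ab_exact_iff] at h
  exact h x hx

lemma hom_exact_elem' (F : T ⥤ Ab.{u}) [F.IsHomological] {X Y Z : T} {f : X ⟶ Y}
    {g : Y ⟶ Z} {h : Z ⟶ X⟦(1:ℤ)⟧}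
    (hTr : Pretriangulated.Triangle.mk f g h ∈ distTriang T) (x : F.obj Y)
    (hx : F.map g x = 0) : ∃ y : F.obj X, F.map f y = x :=
  hom_exact_elem F hTr x hx

lemma nat_apply {F F' : T ⥤ Ab.{u}} (Φ : F ⟶ F') {X Y : T} (f : X ⟶ Y) (x : F.obj X) :
    Φ.app Y (F.map f x) = F'.map f (Φ.app X x) := by
  rw [← comp_apply, Φ.naturality, comp_apply]

lemma map_comp_apply (F : T ⥤ Ab.{u}) {X Y Z : T} (f : X ⟶ Y) (g : Y ⟶ Z) (x : F.obj X) :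
    F.map (f ≫ g) x = F.map g (F.map f x) := by
  rw [F.map_comp]; simp

lemma map_zero_mor_apply (F : T ⥤ Ab.{u}) [F.IsHomological] {X Y : T} (x : F.obj X) :
    F.map (0 : X ⟶ Y) x = 0 := by
  rw [F.map_zero]; simp

lemma colimMap_ι_apply {J : Type u} [SmallCategory J] {D D' : J ⥤ Ab.{u}} (φ : D ⟶ D')
    (j : J) (x : D.obj j) :
    colimMap φ (colimit.ι D j x) = colimit.ι D' j (φ.app j x) := by
  rw [← comp_apply, ι_colimMap, comp_apply]

end ElemHelpers

section ColimHelpers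

lemma nat_app_apply {J : Type u} [SmallCategory J] {D D' : J ⥤ Ab.{u}} (φ : D ⟶ D')
    {i k : J} (f : i ⟶ k) (x : D.obj i) :
    φ.app k (D.map f x) = D'.map f (φ.app i x) := by
  rw [← comp_apply, φ.naturality, comp_apply]

lemma ι_eq_ι_zero_of_app_zero {J : Type u} [SmallCategory J] [IsFiltered J]
    {D D' : J ⥤ Ab.{u}} (φ : D ⟶ D') [IsIso (colimMap φ)] (j : J) (x : D.obj j)
    (hx : φ.app j x = 0) : colimit.ι D j x = colimit.ι D j 0 := by
  apply (ConcreteCategory.bijective_of_isIso (colimMap φ)).1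
  show colimMap φ (colimit.ι D j x) = colimMap φ (colimit.ι D j 0)
  calc colimMap φ (colimit.ι D j x) = colimit.ι D' j (φ.app j x) := colimMap_ι_apply _ _ _
    _ = colimit.ι D' j 0 := congrArg _ hx
    _ = colimit.ι D' j (φ.app j 0) := (congrArg _ (map_zero _)).symm
    _ = colimMap φ (colimit.ι D j 0) := (colimMap_ι_apply _ _ _).symm

/-- If the colimit comparison map is an isomorphism, an element of some stage of `D`
killed by `φ` dies at some later stage. -/
lemma exists_map_zero {J : Type u} [SmallCategory J] [IsFiltered J]
    {D D' : J ⥤ Ab.{u}} (φ : D ⟶ D') [IsIso (colimMap φ)] (j : J) (x : D.obj j)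
    (hx : φ.app j x = 0) : ∃ (k : J) (f : j ⟶ k), D.map f x = 0 := by
  have h := ι_eq_ι_zero_of_app_zero φ j x hx
  obtain ⟨k, f, g, hfg⟩ := Concrete.colimit_exists_of_rep_eq D _ _ h
  refine ⟨k, f, ?_⟩
  calc D.map f x = D.map g 0 := hfg
    _ = 0 := map_zero _

/-- If the colimit comparison map is an isomorphism, any element of a stage of `D'`
is hit by `φ` after passing to a later stage. -/
lemma exists_rep_of_isIso {J : Type u} [SmallCategory J] [IsFiltered J]
    {D D' : J ⥤ Ab.{u}} (φ : D ⟶ D') [IsIso (colimMap φ)] (j : J) (x' : D'.obj j) :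
    ∃ (k : J) (f : j ⟶ k) (y : D.obj k), φ.app k y = D'.map f x' := by
  obtain ⟨ξ, hξ⟩ := (ConcreteCategory.bijective_of_isIso (colimMap φ)).2 (colimit.ι D' j x')
  obtain ⟨i, y, rfl⟩ := Concrete.colimit_exists_rep D ξ
  have h : colimit.ι D' i (φ.app i y) = colimit.ι D' j x' :=
    (colimMap_ι_apply φ i y).symm.trans hξ
  obtain ⟨k, f, g, hfg⟩ := Concrete.colimit_exists_of_rep_eq D' _ _ h
  refine ⟨k, g, D.map f y, ?_⟩
  calc φ.app k (D.map f y) = D'.map f (φ.app i y) := nat_app_apply φ f y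
    _ = D'.map g x' := hfg

end ColimHelpers

section Main

variable [IsTriangulated T] [ObjectProperty.IsClosedUnderIsomorphisms E.P]

lemma surj_aux {F F' : T ⥤ Ab.{u}} [F.IsHomological] [F'.IsHomological] (Φ : F ⟶ F')
    (hloc : ∀ B : T, IsIso (locMapNat E Φ B))
    (hcoloc : ∀ B : T, IsIso (colocMapNat E Φ B)) (B : T) :
    Function.Surjective (Φ.app B) := by
  intro x'
  haveI : IsIso (colimMap (woWhisker E Φ B)) := hloc B
  haveI : IsIso (colimMap (suboWhisker E Φ B)) := hcoloc B
  haveI : IsIso (colimMap (suboWhisker E Φ (B⟦(1:ℤ)⟧))) := hcoloc (B⟦(1:ℤ)⟧)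
  let j₀ : WoCat E B := ⟨Under.mk (𝟙 B), E.W.id_mem B⟩
  obtain ⟨j₂, l, y, hy⟩ := exists_rep_of_isIso (woWhisker E Φ B) j₀ x'
  have hz : Φ.app j₂.obj.right y = F'.map j₂.obj.hom x' := by
    have h2 : l.hom.right = j₂.obj.hom := (id_comp _).symm.trans (Under.w l.hom)
    calc Φ.app j₂.obj.right y = F'.map l.hom.right x' := hy
      _ = F'.map j₂.obj.hom x' := by rw [h2]
  obtain ⟨Et, p, q, hT0, hEt⟩ := j₂.property
  have h0 : j₂.obj.hom ≫ p = 0 := comp_distTriang_mor_zero₁₂ _ hT0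
  have hw : Φ.app Et (F.map p y) = 0 :=
    calc Φ.app Et (F.map p y) = F'.map p (Φ.app j₂.obj.right y) := nat_apply Φ p y
      _ = F'.map p (F'.map j₂.obj.hom x') := congrArg _ hz
      _ = F'.map (j₂.obj.hom ≫ p) x' := (map_comp_apply F' _ _ _).symm
      _ = F'.map (0 : B ⟶ Et) x' := by rw [h0]
      _ = 0 := map_zero_mor_apply F' x'
  let o₁ : SuboCat E (B⟦(1:ℤ)⟧) := ⟨Over.mk q, hEt⟩
  obtain ⟨o₂, f, hf0⟩ := exists_map_zero (suboWhisker E Φ (B⟦(1:ℤ)⟧)) o₁ (F.map p y) hw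
  have hfw : F.map f.hom.left (F.map p y) = 0 := hf0
  let q₂ : o₂.obj.left ⟶ (B⟦(1:ℤ)⟧) := o₂.obj.hom
  obtain ⟨D₂, t₂, p₂, hT₂⟩ := distinguished_cocone_triangle₂ q₂
  obtain ⟨m, hm₁, hm₂⟩ := complete_distinguished_triangle_morphism₂ _ _ hT0 hT₂ (𝟙 B) f.hom.left (by
    show q ≫ (𝟙 B)⟦(1:ℤ)⟧' = f.hom.left ≫ q₂
    rw [CategoryTheory.Functor.map_id, comp_id]
    exact (Over.w f.hom).symm)
  have hm₁' : j₂.obj.hom ≫ m = t₂ := by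
    have h : j₂.obj.hom ≫ m = 𝟙 B ≫ t₂ := hm₁
    rwa [id_comp] at h
  have hm₂' : p ≫ f.hom.left = m ≫ p₂ := hm₂
  have hz₂0 : F.map p₂ (F.map m y) = 0 :=
    calc F.map p₂ (F.map m y) = F.map (m ≫ p₂) y := (map_comp_apply F _ _ _).symm
      _ = F.map (p ≫ f.hom.left) y := by rw [← hm₂']; rfl
      _ = F.map f.hom.left (F.map p y) := map_comp_apply F _ _ _
      _ = 0 := hfw
  obtain ⟨x, hx⟩ := hom_exact_elem' F hT₂ (F.map m y) hz₂0
  have hdiff : F'.map t₂ (Φ.app B x - x') = 0 := by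
    have e1 : F'.map t₂ (Φ.app B x) = Φ.app D₂ (F.map m y) :=
      (nat_apply Φ t₂ x).symm.trans (congrArg (Φ.app D₂) hx)
    have e2 : Φ.app D₂ (F.map m y) = F'.map t₂ x' :=
      (nat_apply Φ m y).trans ((congrArg _ hz).trans ((map_comp_apply F' _ _ _).symm.trans
        (congrArg (fun g => F'.map g x') hm₁')))
    have e0 : F'.map t₂ (Φ.app B x - x') = F'.map t₂ (Φ.app B x) - F'.map t₂ x' := map_sub _ _ _
    rw [e0, e1, e2]
    exact sub_eq_zero_of_eq rfl
  have hT₃ := inv_rot_of_distTriang _ hT₂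
  let e₂ : (Pretriangulated.Triangle.mk t₂ p₂ q₂).invRotate.obj₁ ⟶ B :=
    (Pretriangulated.Triangle.mk t₂ p₂ q₂).invRotate.mor₁
  obtain ⟨v, hv⟩ := hom_exact_elem F' hT₃ (Φ.app B x - x') hdiff
  replace hv : F'.map e₂ v = Φ.app B x - x' := hv
  have hE₃ : E.P ((Pretriangulated.Triangle.mk t₂ p₂ q₂).invRotate.obj₁) :=
    E.shift _ (-1) o₂.property
  let o₃ : SuboCat E B := ⟨Over.mk e₂, hE₃⟩
  obtain ⟨o₅, a, u, hu⟩ := exists_rep_of_isIso (suboWhisker E Φ B) o₃ v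
  have hu' : Φ.app o₅.obj.left u = F'.map a.hom.left v := hu
  let s₅ : o₅.obj.left ⟶ B := o₅.obj.hom
  have h5 : a.hom.left ≫ s₅ = e₂ := Over.w a.hom
  refine ⟨x - F.map s₅ u, ?_⟩
  have key : Φ.app B x - x' = Φ.app B (F.map s₅ u) :=
    calc Φ.app B x - x' = F'.map e₂ v := hv.symm
      _ = F'.map (a.hom.left ≫ s₅) v := by rw [h5]
      _ = F'.map s₅ (F'.map a.hom.left v) := map_comp_apply F' _ _ _
      _ = F'.map s₅ (Φ.app o₅.obj.left u) := by rw [hu']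
      _ = Φ.app B (F.map s₅ u) := (nat_apply Φ s₅ u).symm
  have e0 : Φ.app B (x - F.map s₅ u) = Φ.app B x - Φ.app B (F.map s₅ u) := map_sub _ _ _
  rw [e0, ← key]
  abel

lemma inj_aux {F F' : T ⥤ Ab.{u}} [F.IsHomological] [F'.IsHomological] (Φ : F ⟶ F')
    (hloc : ∀ B : T, IsIso (locMapNat E Φ B))
    (hcoloc : ∀ B : T, IsIso (colocMapNat E Φ B)) (B : T) :
    Function.Injective (Φ.app B) := by
  have hsurj := surj_aux E Φ hloc hcoloc
  intro x₁ x₂ h12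
  suffices h : ∀ x : F.obj B, Φ.app B x = 0 → x = 0 by
    have h' := h (x₁ - x₂) (by rw [map_sub, h12, sub_self])
    exact sub_eq_zero.mp h'
  intro x hx
  haveI : IsIso (colimMap (woWhisker E Φ B)) := hloc B
  haveI : IsIso (colimMap (suboWhisker E Φ B)) := hcoloc B
  let j₀ : WoCat E B := ⟨Under.mk (𝟙 B), E.W.id_mem B⟩
  obtain ⟨j₁, f, hf0⟩ := exists_map_zero (woWhisker E Φ B) j₀ x hx
  have hsx : F.map j₁.obj.hom x = 0 := by
    have hf : f.hom.right = j₁.obj.hom := (id_comp _).symm.trans (Under.w f.hom)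
    rw [← hf]; exact hf0
  obtain ⟨E', p, q, hT0, hE'⟩ := j₁.property
  have hT₁ := inv_rot_of_distTriang _ hT0
  let e : (Pretriangulated.Triangle.mk j₁.obj.hom p q).invRotate.obj₁ ⟶ B :=
    (Pretriangulated.Triangle.mk j₁.obj.hom p q).invRotate.mor₁
  obtain ⟨y, hy⟩ := hom_exact_elem F hT₁ x hsx
  replace hy : F.map e y = x := hy
  have hT₂ := inv_rot_of_distTriang _ hT₁
  let d : (Pretriangulated.Triangle.mk j₁.obj.hom p q).invRotate.invRotate.obj₁ ⟶
      (Pretriangulated.Triangle.mk j₁.obj.hom p q).invRotate.obj₁ :=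
    (Pretriangulated.Triangle.mk j₁.obj.hom p q).invRotate.invRotate.mor₁
  have hside : F'.map e
      (Φ.app (Pretriangulated.Triangle.mk j₁.obj.hom p q).invRotate.obj₁ y) = 0 :=
    calc F'.map e (Φ.app (Pretriangulated.Triangle.mk j₁.obj.hom p q).invRotate.obj₁ y)
        = Φ.app B (F.map e y) := (nat_apply Φ e y).symm
      _ = Φ.app B x := congrArg _ hy
      _ = 0 := hx
  obtain ⟨v', hv'⟩ := hom_exact_elem F' hT₂
    (Φ.app (Pretriangulated.Triangle.mk j₁.obj.hom p q).invRotate.obj₁ y) hside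
  replace hv' : F'.map d v'
      = Φ.app (Pretriangulated.Triangle.mk j₁.obj.hom p q).invRotate.obj₁ y := hv'
  obtain ⟨v₀, hv₀⟩ := hsurj _ v'
  have hΦy₁ : Φ.app (Pretriangulated.Triangle.mk j₁.obj.hom p q).invRotate.obj₁
      (y - F.map d v₀) = 0 := by
    have e0 : Φ.app (Pretriangulated.Triangle.mk j₁.obj.hom p q).invRotate.obj₁
        (y - F.map d v₀)
        = Φ.app (Pretriangulated.Triangle.mk j₁.obj.hom p q).invRotate.obj₁ y
          - Φ.app (Pretriangulated.Triangle.mk j₁.obj.hom p q).invRotate.obj₁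
            (F.map d v₀) := map_sub _ _ _
    have e1 : Φ.app (Pretriangulated.Triangle.mk j₁.obj.hom p q).invRotate.obj₁
        (F.map d v₀)
        = F'.map d (Φ.app (Pretriangulated.Triangle.mk j₁.obj.hom p q).invRotate.invRotate.obj₁ v₀) :=
      nat_apply Φ d v₀
    rw [e0, e1, hv₀, hv']
    exact sub_eq_zero_of_eq rfl
  have hxy₁ : F.map e (y - F.map d v₀) = x := by
    have h0 : d ≫ e = 0 := comp_distTriang_mor_zero₁₂ _ hT₂
    have e0 : F.map e (y - F.map d v₀) = F.map e y - F.map e (F.map d v₀) := map_sub _ _ _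
    have e1 : F.map e (F.map d v₀) = F.map (d ≫ e) v₀ := (map_comp_apply F _ _ _).symm
    rw [e0, e1, h0, map_zero_mor_apply, sub_zero]
    exact hy
  have hEE : E.P ((Pretriangulated.Triangle.mk j₁.obj.hom p q).invRotate.obj₁) :=
    E.shift _ (-1) hE'
  let o : SuboCat E B := ⟨Over.mk e, hEE⟩
  obtain ⟨o₆, a, ha0⟩ := exists_map_zero (suboWhisker E Φ B) o (y - F.map d v₀) hΦy₁
  have ha0' : F.map a.hom.left (y - F.map d v₀) = 0 := ha0
  let s₆ : o₆.obj.left ⟶ B := o₆.obj.hom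
  have h5 : a.hom.left ≫ s₆ = e := Over.w a.hom
  have hfin : x = F.map s₆ (F.map a.hom.left (y - F.map d v₀)) :=
    calc x = F.map e (y - F.map d v₀) := hxy₁.symm
      _ = F.map (a.hom.left ≫ s₆) (y - F.map d v₀) := by rw [h5]
      _ = F.map s₆ (F.map a.hom.left (y - F.map d v₀)) := map_comp_apply F _ _ _
  rw [hfin, ha0', map_zero]

end Main


/-- **A natural transformation of homological functors whose localisation and
colocalisation are invertible is invertible.**  Let `Φ : F ⟶ F'` be a natural
transformation between homological functors on a small triangulated category
`T` with thick subcategory `E`.  If for every object `B` both induced maps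
`RΦ_B : RF(B) ⟶ RF'(B)` and `R⊥Φ_B : R⊥F(B) ⟶ R⊥F'(B)` are isomorphisms, then
`Φ_B : F(B) ⟶ F'(B)` is an isomorphism for every `B`. -/
theorem isIso_of_isIso_loc_coloc [IsTriangulated T] [ObjectProperty.IsClosedUnderIsomorphisms E.P]
    (hthick : ∀ ⦃X Y : T⦄ (i : X ⟶ Y) (r : Y ⟶ X), i ≫ r = 𝟙 X → E.P Y → E.P X)
    {F F' : T ⥤ Ab.{u}} [F.IsHomological] [F'.IsHomological] (Φ : F ⟶ F')
    (hloc : ∀ B : T, IsIso (locMapNat E Φ B))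
    (hcoloc : ∀ B : T, IsIso (colocMapNat E Φ B)) :
    ∀ B : T, IsIso (Φ.app B) := by
  intro B
  exact (ConcreteCategory.isIso_iff_bijective (Φ.app B)).mpr
    ⟨inj_aux E Φ hloc hcoloc B, surj_aux E Φ hloc hcoloc B⟩
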